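/- arXiv:2012.05667 — 5 statements merged into one kernel-verified Lean document; each statement's English description precedes it below -/
import Mathlib

section
/- Let H_b ∈ ℂ^{N_r×N_t} and H_e ∈ ℂ^{N_e×N_t} be complex matrices such that Δ := H_bᴴH_b − H_eᴴH_e is positive semidefinite, and let X ∈ ℂ^{N_t×N_t} be Hermitian positive semidefinite. Then the matrix I + X H_eᴴ H_e is invertible and det(I + H_b X H_bᴴ) / det(I + H_e X H_eᴴ) = det(I + Δ^{1/2} (I + X H_eᴴ H_e)^{-1} X Δ^{1/2}), where Δ^{1/2} is the unique positive semidefinite square root of Δ. (In particular both sides are positive reals.) -/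
open Matrix
open scoped ComplexOrder

/-- The square root of a positive semidefinite matrix, as defined in the older Mathlib
(removed since in favour of `CFC.sqrt`). -/
noncomputable def Matrix.PosSemidef.sqrt {n 𝕜 : Type*} [Fintype n] [RCLike 𝕜] [DecidableEq n]
    {A : Matrix n n 𝕜} (hA : A.PosSemidef) : Matrix n n 𝕜 :=
  hA.1.eigenvectorUnitary.1 * diagonal ((↑) ∘ (√·) ∘ hA.1.eigenvalues) *
  (star hA.1.eigenvectorUnitary : Matrix n n 𝕜)

private lemma Matrix.PosSemidef.sqrt_mul_self' {n 𝕜 : Type*} [Fintype n] [RCLike 𝕜]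
    [DecidableEq n] {A : Matrix n n 𝕜} (hA : A.PosSemidef) : hA.sqrt * hA.sqrt = A := by
  have hU : (star hA.1.eigenvectorUnitary : Matrix n n 𝕜) * hA.1.eigenvectorUnitary.1 = 1 :=
    by simp
  have hD : diagonal (((↑) ∘ (√·) ∘ hA.1.eigenvalues : n → 𝕜)) *
      diagonal ((↑) ∘ (√·) ∘ hA.1.eigenvalues) = diagonal (RCLike.ofReal ∘ hA.1.eigenvalues) := by
    rw [diagonal_mul_diagonal]
    congr 1
    funext i
    simp only [Function.comp_apply]
    rw [← RCLike.ofReal_mul, Real.mul_self_sqrt (hA.eigenvalues_nonneg i)]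
  conv_rhs => rw [hA.1.spectral_theorem, Unitary.conjStarAlgAut_apply]
  unfold Matrix.PosSemidef.sqrt
  rw [← hD]
  simp only [Matrix.mul_assoc]
  rw [← Matrix.mul_assoc _ _ (diagonal _ * _), hU, Matrix.one_mul]

private lemma cdiv_pos {a b : ℂ} (ha : 0 < a) (hb : 0 < b) : 0 < a / b := by
  rw [Complex.lt_def] at ha hb
  have ha' : a = (a.re : ℂ) := Complex.ext rfl (by simpa using ha.2.symm)
  have hb' : b = (b.re : ℂ) := Complex.ext rfl (by simpa using hb.2.symm)
  rw [ha', hb', ← Complex.ofReal_div]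
  rw [Complex.zero_lt_real]
  exact div_pos (by simpa using ha.1) (by simpa using hb.1)

/-- determinant identity for the degraded MIMO wiretap channel
(equation (37) of the paper). -/
theorem stmt_0 {Nr Nt Ne : ℕ}
    (Hb : Matrix (Fin Nr) (Fin Nt) ℂ) (He : Matrix (Fin Ne) (Fin Nt) ℂ)
    (X : Matrix (Fin Nt) (Fin Nt) ℂ) (hX : X.PosSemidef)
    (hΔ : (Hbᴴ * Hb - Heᴴ * He).PosSemidef) :
    IsUnit (1 + X * Heᴴ * He) ∧
    (1 + Hb * X * Hbᴴ).det / (1 + He * X * Heᴴ).det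
      = (1 + hΔ.sqrt * (1 + X * Heᴴ * He)⁻¹ * X * hΔ.sqrt).det ∧
    0 < (1 + Hb * X * Hbᴴ).det / (1 + He * X * Heᴴ).det ∧
    0 < (1 + hΔ.sqrt * (1 + X * Heᴴ * He)⁻¹ * X * hΔ.sqrt).det := by
  have hSS : hΔ.sqrt * hΔ.sqrt = Hbᴴ * Hb - Heᴴ * He := hΔ.sqrt_mul_self'
  generalize hΔ.sqrt = S at hSS ⊢
  -- positive definiteness of 1 + H X Hᴴ
  have hpd : ∀ {k : ℕ} (H : Matrix (Fin k) (Fin Nt) ℂ), (1 + H * X * Hᴴ).PosDef := by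
    intro k H
    exact Matrix.PosDef.add_posSemidef Matrix.PosDef.one
      (hX.mul_mul_conjTranspose_same H)
  have hdb : 0 < (1 + Hb * X * Hbᴴ).det := (hpd Hb).det_pos
  have hde : 0 < (1 + He * X * Heᴴ).det := (hpd He).det_pos
  -- identify det (1 + X Hᴴ H) with det (1 + H X Hᴴ)
  have hswap : ∀ {k : ℕ} (H : Matrix (Fin k) (Fin Nt) ℂ),
      (1 + X * Hᴴ * H).det = (1 + H * X * Hᴴ).det := by
    intro k H
    rw [Matrix.det_one_add_mul_comm (X * Hᴴ) H, ← Matrix.mul_assoc]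
  have hdM : 0 < (1 + X * Heᴴ * He).det := by rw [hswap He]; exact hde
  have hdMu : IsUnit (1 + X * Heᴴ * He).det := hdM.ne'.isUnit
  have hMu : IsUnit (1 + X * Heᴴ * He) := (Matrix.isUnit_iff_isUnit_det _).2 hdMu
  have heq : (1 + Hb * X * Hbᴴ).det / (1 + He * X * Heᴴ).det
      = (1 + S * (1 + X * Heᴴ * He)⁻¹ * X * S).det := by
    have hMinv : (1 + X * Heᴴ * He) * (1 + X * Heᴴ * He)⁻¹ = 1 :=
      Matrix.mul_nonsing_inv _ hdMu
    have hfact : 1 + X * Hbᴴ * Hb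
        = (1 + X * Heᴴ * He) * (1 + (1 + X * Heᴴ * He)⁻¹ * (X * (S * S))) := by
      rw [mul_add, mul_one, ← Matrix.mul_assoc, hMinv, one_mul, hSS, mul_sub,
        ← Matrix.mul_assoc, ← Matrix.mul_assoc]
      abel
    have hdet1 : (1 + Hb * X * Hbᴴ).det
        = (1 + X * Heᴴ * He).det * (1 + (1 + X * Heᴴ * He)⁻¹ * (X * (S * S))).det := by
      rw [← hswap Hb, hfact, Matrix.det_mul]
    have hdet2 : (1 + He * X * Heᴴ).det = (1 + X * Heᴴ * He).det := (hswap He).symm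
    rw [hdet1, hdet2, mul_div_cancel_left₀ _ hdM.ne']
    have h3 : (1 : Matrix (Fin Nt) (Fin Nt) ℂ) + (1 + X * Heᴴ * He)⁻¹ * (X * (S * S))
        = 1 + ((1 + X * Heᴴ * He)⁻¹ * X * S) * S := by
      rw [← Matrix.mul_assoc, ← Matrix.mul_assoc]
    rw [h3, Matrix.det_one_add_mul_comm ((1 + X * Heᴴ * He)⁻¹ * X * S) S]
    congr 1
    rw [← Matrix.mul_assoc, ← Matrix.mul_assoc]
  exact ⟨hMu, heq, cdiv_pos hdb hde, by rw [← heq]; exact cdiv_pos hdb hde⟩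
end

section
/- Let H_b ∈ ℂ^{N_r×N_t} and H_e ∈ ℂ^{N_e×N_t} be complex matrices and let V, X* ∈ ℂ^{N_t×N_t} be Hermitian positive semidefinite. Set Γ := H_eᴴ (I + H_e V H_eᴴ)^{-1} H_e. If ln det(I + H_b X* H_bᴴ) − Re tr(Γ X*) ≥ ln det(I + H_b V H_bᴴ) − Re tr(Γ V), then ln det(I + H_b X* H_bᴴ) − ln det(I + H_e X* H_eᴴ) ≥ ln det(I + H_b V H_bᴴ) − ln det(I + H_e V H_eᴴ), i.e., C_s(X*) ≥ C_s(V). -/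
open Matrix
open scoped ComplexOrder

lemma trace_eq_sum_eigs {n : ℕ} {A : Matrix (Fin n) (Fin n) ℂ} (hA : A.IsHermitian) :
    A.trace = ∑ i, (hA.eigenvalues i : ℂ) := by
  conv_lhs => rw [hA.spectral_theorem, Unitary.conjStarAlgAut_apply]
  rw [trace_mul_cycle]
  rw [show (star (hA.eigenvectorUnitary : Matrix (Fin n) (Fin n) ℂ)) *
      (hA.eigenvectorUnitary : Matrix (Fin n) (Fin n) ℂ) = 1 from
    (Matrix.mem_unitaryGroup_iff').mp hA.eigenvectorUnitary.2, one_mul, trace_diagonal]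
  rfl

/-- For a PD Hermitian matrix M: log det M ≤ tr M - n. -/
lemma logdet_le_trace {n : ℕ} {M : Matrix (Fin n) (Fin n) ℂ} (hM : M.PosDef) :
    Real.log M.det.re ≤ (M.trace).re - n := by
  have hdet : M.det = ((∏ i, hM.isHermitian.eigenvalues i : ℝ) : ℂ) := by
    rw [hM.isHermitian.det_eq_prod_eigenvalues]; push_cast; rfl
  have htr : (M.trace).re = ∑ i, hM.isHermitian.eigenvalues i := by
    rw [trace_eq_sum_eigs hM.isHermitian]; push_cast [Complex.re_sum]; rfl
  rw [hdet, Complex.ofReal_re, htr]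
  have hpos : ∀ i ∈ Finset.univ, (0:ℝ) < hM.isHermitian.eigenvalues i :=
    fun i _ => hM.eigenvalues_pos i
  rw [Real.log_prod (fun i hi => (hpos i hi).ne')]
  calc ∑ i, Real.log (hM.isHermitian.eigenvalues i)
      ≤ ∑ i, (hM.isHermitian.eigenvalues i - 1) := by
        apply Finset.sum_le_sum
        intro i hi
        exact Real.log_le_sub_one_of_pos (hpos i hi)
    _ = (∑ i, hM.isHermitian.eigenvalues i) - n := by
        rw [Finset.sum_sub_distrib]; simp

open scoped MatrixOrder in
lemma logdet_key {n : ℕ} {A B : Matrix (Fin n) (Fin n) ℂ} (hA : A.PosDef) (hB : B.PosDef) :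
    Real.log B.det.re ≤ Real.log A.det.re + ((A⁻¹ * (B - A)).trace).re := by
  classical
  set S := CFC.sqrt A with hSdef
  have hS : S.PosSemidef := (CFC.sqrt_nonneg A).posSemidef
  have hSH : (S⁻¹).IsHermitian := hS.isHermitian.inv
  have hSS : S * S = A := CFC.sqrt_mul_sqrt_self A hA.posSemidef.nonneg
  have hSdet : S.det * S.det = A.det := by rw [← det_mul, hSS]
  have hAdet : IsUnit A.det := hA.det_pos.ne'.isUnit
  have hSdetne : S.det ≠ 0 := by
    intro h0
    rw [h0, mul_zero] at hSdet
    exact hAdet.ne_zero hSdet.symm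
  have hSu : IsUnit S := (isUnit_iff_isUnit_det S).mpr hSdetne.isUnit
  set M := S⁻¹ * B * S⁻¹ with hMdef
  have hM : M.PosDef := by
    refine Matrix.PosDef.of_dotProduct_mulVec_pos ?_ ?_
    · have := isHermitian_mul_mul_conjTranspose (S⁻¹) hB.isHermitian
      rwa [hSH.eq] at this
    · intro x hx
      have hy : S⁻¹ *ᵥ x ≠ 0 := by
        intro h0
        apply hx
        have : S *ᵥ (S⁻¹ *ᵥ x) = S *ᵥ 0 := by rw [h0]
        rwa [mulVec_mulVec, Matrix.mul_nonsing_inv S hSdetne.isUnit, one_mulVec, mulVec_zero] at this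
      have key : star x ⬝ᵥ M *ᵥ x = star (S⁻¹ *ᵥ x) ⬝ᵥ B *ᵥ (S⁻¹ *ᵥ x) := by
        rw [hMdef, ← mulVec_mulVec, ← mulVec_mulVec, star_mulVec, hSH.eq, dotProduct_mulVec]
      rw [key]
      exact hB.dotProduct_mulVec_pos hy
  have hAinv : A⁻¹ = S⁻¹ * S⁻¹ := by rw [← hSS, Matrix.mul_inv_rev]
  have hdetM : B.det = A.det * M.det := by
    rw [hMdef, det_mul, det_mul, det_nonsing_inv, Ring.inverse_eq_inv']
    field_simp [← hSdet]
    rw [← hSdet]; ring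
  -- trace identity
  have htr : ((A⁻¹ * (B - A)).trace).re = (M.trace).re - n := by
    have h1 : A⁻¹ * (B - A) = A⁻¹ * B - 1 := by
      rw [Matrix.mul_sub, Matrix.nonsing_inv_mul A hAdet]
    have h2 : (A⁻¹ * B).trace = M.trace := by
      rw [hAinv, hMdef, Matrix.mul_assoc, trace_mul_comm, Matrix.mul_assoc]
    rw [h1, trace_sub, h2, trace_one]
    simp
  have hAre : 0 < A.det.re ∧ A.det.im = 0 := by
    have := hA.det_pos
    rw [Complex.lt_def] at this
    simpa using ⟨this.1, this.2.symm⟩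
  have hMre : 0 < M.det.re ∧ M.det.im = 0 := by
    have := hM.det_pos
    rw [Complex.lt_def] at this
    simpa using ⟨this.1, this.2.symm⟩
  have hBre : B.det.re = A.det.re * M.det.re := by
    rw [hdetM, Complex.mul_re, hAre.2, hMre.2]
    ring
  rw [hBre, Real.log_mul hAre.1.ne' hMre.1.ne', htr]
  have := logdet_le_trace hM
  linarith

/-- ascent property of the DC algorithm step of Algorithm 1:
the maximizer of the linearized objective does not decrease the secrecy rate. -/
theorem stmt_6 {Nr Ne Nt : ℕ}
    (Hb : Matrix (Fin Nr) (Fin Nt) ℂ) (He : Matrix (Fin Ne) (Fin Nt) ℂ)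
    (V Xs : Matrix (Fin Nt) (Fin Nt) ℂ) (hV : V.PosSemidef) (hXs : Xs.PosSemidef)
    (h : Real.log ((1 + Hb * Xs * Hbᴴ).det.re)
          - ((Heᴴ * (1 + He * V * Heᴴ)⁻¹ * He * Xs).trace).re
        ≥ Real.log ((1 + Hb * V * Hbᴴ).det.re)
          - ((Heᴴ * (1 + He * V * Heᴴ)⁻¹ * He * V).trace).re) :
    Real.log ((1 + Hb * Xs * Hbᴴ).det.re) - Real.log ((1 + He * Xs * Heᴴ).det.re)
      ≥ Real.log ((1 + Hb * V * Hbᴴ).det.re) - Real.log ((1 + He * V * Heᴴ).det.re) := by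
  set A := 1 + He * V * Heᴴ with hAdef
  set B := 1 + He * Xs * Heᴴ with hBdef
  have hA : A.PosDef := Matrix.PosDef.one.add_posSemidef (hV.mul_mul_conjTranspose_same He)
  have hB : B.PosDef := Matrix.PosDef.one.add_posSemidef (hXs.mul_mul_conjTranspose_same He)
  have key := logdet_key hA hB
  have htr : (A⁻¹ * (B - A)).trace
      = (Heᴴ * A⁻¹ * He * Xs).trace - (Heᴴ * A⁻¹ * He * V).trace := by
    have hBA : B - A = He * Xs * Heᴴ - He * V * Heᴴ := by
      rw [hAdef, hBdef, add_sub_add_left_eq_sub]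
    rw [hBA, Matrix.mul_sub, trace_sub]
    congr 1
    · rw [show A⁻¹ * (He * Xs * Heᴴ) = (A⁻¹ * He * Xs) * Heᴴ by
        simp [Matrix.mul_assoc], trace_mul_comm]
      simp [Matrix.mul_assoc]
    · rw [show A⁻¹ * (He * V * Heᴴ) = (A⁻¹ * He * V) * Heᴴ by
        simp [Matrix.mul_assoc], trace_mul_comm]
      simp [Matrix.mul_assoc]
  rw [htr, Complex.sub_re] at key
  linarith
end

section
/- Let c : ℕ → ℝ be a real sequence and q ∈ ℕ. Define γ(n) := min{ c(n−m) : 0 ≤ m ≤ min(n, q) } for each n ∈ ℕ. If c(n+1) ≥ γ(n) for all n ∈ ℕ, then for every n ≥ 1 it holds that γ(n+q) ≥ γ(n−1); in particular, c(n+m) ≥ γ(n−1) for all n ≥ 1 and 0 ≤ m ≤ q. -/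
/-- `gam c q n` is the minimum of `c (n − m)` over `0 ≤ m ≤ min n q`. -/
noncomputable def gam (c : ℕ → ℝ) (q n : ℕ) : ℝ :=
  (Finset.range (min n q + 1)).inf' Finset.nonempty_range_add_one (fun m => c (n - m))

lemma key_le (c : ℕ → ℝ) (q : ℕ) (h : ∀ n, c (n + 1) ≥ gam c q n) :
    ∀ m, m ≤ q → ∀ n, 1 ≤ n → c (n + m) ≥ gam c q (n - 1) := by
  intro m
  induction m using Nat.strong_induction_on with
  | _ m ih =>
    intro hm n hn
    rcases Nat.eq_zero_or_pos m with rfl | hmpos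
    · have := h (n - 1)
      rw [Nat.sub_add_cancel hn] at this
      simpa using this
    · have hm1 : n + m = (n + m - 1) + 1 := by omega
      rw [hm1]
      refine le_trans ?_ (h (n + m - 1))
      unfold gam
      apply Finset.le_inf'
      intro j hj
      simp only [Finset.mem_range] at hj
      by_cases hc : j < m
      · have he : n + m - 1 - j = n + (m - 1 - j) := by omega
        rw [he]
        exact ih (m - 1 - j) (by omega) (by omega) n hn
      · have he : n + m - 1 - j = (n - 1) - (j - m) := by omega
        rw [he]
        apply Finset.inf'_le
        simp only [Finset.mem_range]
        omega

/-- the sequence-monotonicity result underlying Lemma 2 of the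
paper: if each `c (n+1)` is at least the running minimum `γ n`, then
`γ (n+q) ≥ γ (n−1)` and `c (n+m) ≥ γ (n−1)` for `0 ≤ m ≤ q`. -/
theorem stmt_7 (c : ℕ → ℝ) (q : ℕ)
    (h : ∀ n, c (n + 1) ≥ gam c q n) :
    ∀ n, 1 ≤ n →
      gam c q (n + q) ≥ gam c q (n - 1) ∧
      ∀ m, m ≤ q → c (n + m) ≥ gam c q (n - 1) := by
  intro n hn
  constructor
  · show gam c q (n - 1) ≤ _
    conv_rhs => unfold gam
    apply Finset.le_inf'
    intro j hj
    simp only [Finset.mem_range] at hj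
    have he : n + q - j = n + (q - j) := by omega
    rw [he]
    exact key_le c q h (q - j) (by omega) n hn
  · intro m hm
    exact key_le c q h m hm n hn
end

section
/- Let Ψ₁₂ ∈ ℂ^{N_r×N_e}, let U ∈ ℂ^{N_r×N_r} be unitary, and let σ₁, …, σ_{N_r} ≥ 0 be real numbers such that Ψ₁₂Ψ₁₂ᴴ = U diag(σ₁, …, σ_{N_r}) Uᴴ. Define Ξ := diag(2/(1+√(1+4σ₁)), …, 2/(1+√(1+4σ_{N_r}))) and K̄ := −U Ξ Uᴴ Ψ₁₂. Then I − K̄K̄ᴴ is Hermitian positive definite and (I − K̄K̄ᴴ)^{-1} K̄ = −Ψ₁₂. -/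
open Matrix
open scoped ComplexOrder

/-- Unitary congruence of a PosDef matrix is PosDef. -/
lemma posDef_unitary_congr {n : ℕ} (U M : Matrix (Fin n) (Fin n) ℂ)
    (hU : Uᴴ * U = 1) (hM : M.PosDef) : (U * M * Uᴴ).PosDef := by
  have hUU : U * Uᴴ = 1 := mul_eq_one_comm.mp hU
  refine Matrix.PosDef.of_dotProduct_mulVec_pos ?_ ?_
  · unfold Matrix.IsHermitian
    simp only [Matrix.conjTranspose_mul, Matrix.conjTranspose_conjTranspose, hM.1.eq,
      Matrix.mul_assoc]
  · intro x hx
    have hy : Uᴴ *ᵥ x ≠ 0 := by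
      intro h
      apply hx
      have : U *ᵥ (Uᴴ *ᵥ x) = x := by
        rw [Matrix.mulVec_mulVec, hUU, Matrix.one_mulVec]
      rw [h, Matrix.mulVec_zero] at this
      exact this.symm
    have key : star x ⬝ᵥ ((U * M * Uᴴ) *ᵥ x) = star (Uᴴ *ᵥ x) ⬝ᵥ (M *ᵥ (Uᴴ *ᵥ x)) := by
      rw [← Matrix.mulVec_mulVec, ← Matrix.mulVec_mulVec, Matrix.dotProduct_mulVec,
        Matrix.star_mulVec, Matrix.conjTranspose_conjTranspose, Matrix.dotProduct_mulVec]
    rw [key]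
    exact hM.dotProduct_mulVec_pos hy

/-- stationarity (KKT) verification in the proof of Lemma 3 of
the paper: the closed-form matrix `K̄` is strictly feasible and satisfies
`(I − K̄K̄ᴴ)⁻¹ K̄ = −Ψ₁₂`. -/
theorem stmt_12 {Nr Ne : ℕ}
    (Ψ : Matrix (Fin Nr) (Fin Ne) ℂ)
    (U : Matrix (Fin Nr) (Fin Nr) ℂ) (hU : Uᴴ * U = 1)
    (σ : Fin Nr → ℝ) (hσ : ∀ i, 0 ≤ σ i)
    (hdecomp : Ψ * Ψᴴ = U * Matrix.diagonal (fun i => ((σ i : ℝ) : ℂ)) * Uᴴ)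
    (Ξ : Matrix (Fin Nr) (Fin Nr) ℂ)
    (hΞ : Ξ = Matrix.diagonal (fun i => ((2 / (1 + Real.sqrt (1 + 4 * σ i)) : ℝ) : ℂ)))
    (K : Matrix (Fin Nr) (Fin Ne) ℂ)
    (hK : K = -(U * Ξ * Uᴴ * Ψ)) :
    (1 - K * Kᴴ).PosDef ∧ (1 - K * Kᴴ)⁻¹ * K = -Ψ := by
  have hUU : U * Uᴴ = 1 := mul_eq_one_comm.mp hU
  set ξ : Fin Nr → ℝ := fun i => 2 / (1 + Real.sqrt (1 + 4 * σ i)) with hξdef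
  set D : Matrix (Fin Nr) (Fin Nr) ℂ := Matrix.diagonal (fun i => ((σ i : ℝ) : ℂ)) with hDdef
  have hΞ2 : Ξ = Matrix.diagonal (fun i => ((ξ i : ℝ) : ℂ)) := hΞ
  have hs : ∀ i, 1 ≤ Real.sqrt (1 + 4 * σ i) := by
    intro i
    have h0 : (0:ℝ) ≤ 1 + 4 * σ i := by linarith [hσ i]
    nlinarith [Real.sq_sqrt h0, Real.sqrt_nonneg (1 + 4 * σ i), hσ i]
  have hξpos : ∀ i, 0 < ξ i := by
    intro i
    have := hs i
    exact div_pos (by norm_num) (by linarith)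
  have hkey : ∀ i, 1 - ξ i * σ i * ξ i = ξ i := by
    intro i
    have h0 : (0:ℝ) ≤ 1 + 4 * σ i := by linarith [hσ i]
    have hsq : Real.sqrt (1 + 4 * σ i) ^ 2 = 1 + 4 * σ i := Real.sq_sqrt h0
    have hne : (1:ℝ) + Real.sqrt (1 + 4 * σ i) ≠ 0 := by
      have := hs i; intro h; linarith
    rw [hξdef]
    field_simp
    nlinarith [hsq]
  -- Ξ is self-adjoint
  have hΞH : Ξᴴ = Ξ := by
    rw [hΞ2, Matrix.diagonal_conjTranspose]
    have : (star fun i => ((ξ i : ℝ) : ℂ)) = fun i => ((ξ i : ℝ) : ℂ) := by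
      funext i
      simp [Complex.conj_ofReal]
    rw [this]
  -- cancellation helpers
  have canc : ∀ {m : ℕ} (Y : Matrix (Fin Nr) (Fin m) ℂ), Uᴴ * (U * Y) = Y := by
    intro m Y
    rw [← Matrix.mul_assoc, hU, Matrix.one_mul]
  have canc2 : ∀ {m : ℕ} (Y : Matrix (Fin Nr) (Fin m) ℂ), U * (Uᴴ * Y) = Y := by
    intro m Y
    rw [← Matrix.mul_assoc, hUU, Matrix.one_mul]
  -- key matrix identity: 1 - K Kᴴ = U * (Ξ * Uᴴ)
  have hKK : 1 - K * Kᴴ = U * (Ξ * Uᴴ) := by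
    rw [hK]
    simp only [Matrix.conjTranspose_neg, Matrix.conjTranspose_mul,
      Matrix.conjTranspose_conjTranspose, Matrix.neg_mul, Matrix.mul_neg, neg_neg, hΞH,
      Matrix.mul_assoc]
    have hΨ : Ψ * (Ψᴴ * (U * (Ξ * Uᴴ))) = U * (D * (Uᴴ * (U * (Ξ * Uᴴ)))) := by
      rw [← Matrix.mul_assoc Ψ Ψᴴ, ← Matrix.mul_assoc U D, hdecomp]
      simp only [Matrix.mul_assoc]
    rw [hΨ, canc, canc]
    have hmid : Ξ * (D * (Ξ * Uᴴ)) = Matrix.diagonal (fun i => ((ξ i * σ i * ξ i : ℝ) : ℂ)) * Uᴴ := by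
      rw [← Matrix.mul_assoc, ← Matrix.mul_assoc, hΞ2, hDdef,
        Matrix.diagonal_mul_diagonal, Matrix.diagonal_mul_diagonal]
      have : (fun i => ((ξ i : ℝ) : ℂ) * ((σ i : ℝ) : ℂ) * ((ξ i : ℝ) : ℂ))
          = fun i => ((ξ i * σ i * ξ i : ℝ) : ℂ) := by
        funext i; push_cast; ring
      rw [this]
    rw [hmid]
    have hone : (1 : Matrix (Fin Nr) (Fin Nr) ℂ) = U * (1 * Uᴴ) := by
      rw [Matrix.one_mul, hUU]
    rw [hone, ← Matrix.mul_sub, ← Matrix.sub_mul]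
    have : (1 : Matrix (Fin Nr) (Fin Nr) ℂ)
        - Matrix.diagonal (fun i => ((ξ i * σ i * ξ i : ℝ) : ℂ)) = Ξ := by
      rw [hΞ2, ← Matrix.diagonal_one, Matrix.diagonal_sub]
      have h2 : (fun i => (1 : ℂ) - ((ξ i * σ i * ξ i : ℝ) : ℂ)) = fun i => ((ξ i : ℝ) : ℂ) := by
        funext i
        rw [show ((ξ i : ℝ) : ℂ) = ((1 - ξ i * σ i * ξ i : ℝ) : ℂ) from
          (congrArg Complex.ofReal (hkey i)).symm]
        push_cast
        ring
      rw [h2]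
    rw [this]
  -- positive definiteness
  have hΞpd : Ξ.PosDef := by
    rw [hΞ2]
    exact Matrix.PosDef.diagonal fun i => by
      rw [Complex.zero_lt_real]; exact hξpos i
  have hpd : (1 - K * Kᴴ).PosDef := by
    rw [hKK, ← Matrix.mul_assoc]
    exact posDef_unitary_congr U Ξ hU hΞpd
  refine ⟨hpd, ?_⟩
  -- inverse
  set Ξ' : Matrix (Fin Nr) (Fin Nr) ℂ := Matrix.diagonal (fun i => (((ξ i)⁻¹ : ℝ) : ℂ)) with hΞ'def
  have hfun1 : (fun i => ((ξ i : ℝ) : ℂ) * (((ξ i)⁻¹ : ℝ) : ℂ)) = fun _ => (1 : ℂ) := by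
    funext i
    rw [← Complex.ofReal_mul, mul_inv_cancel₀ (ne_of_gt (hξpos i)), Complex.ofReal_one]
  have hfun2 : (fun i => (((ξ i)⁻¹ : ℝ) : ℂ) * ((ξ i : ℝ) : ℂ)) = fun _ => (1 : ℂ) := by
    funext i
    rw [← Complex.ofReal_mul, inv_mul_cancel₀ (ne_of_gt (hξpos i)), Complex.ofReal_one]
  have hΞΞ' : Ξ * Ξ' = 1 := by
    rw [hΞ2, hΞ'def, Matrix.diagonal_mul_diagonal, hfun1, Matrix.diagonal_one]
  have hΞ'Ξ : Ξ' * Ξ = 1 := by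
    rw [hΞ2, hΞ'def, Matrix.diagonal_mul_diagonal, hfun2, Matrix.diagonal_one]
  have hinv : (1 - K * Kᴴ)⁻¹ = U * (Ξ' * Uᴴ) := by
    apply Matrix.inv_eq_right_inv
    rw [hKK]
    calc U * (Ξ * Uᴴ) * (U * (Ξ' * Uᴴ))
        = U * (Ξ * (Uᴴ * (U * (Ξ' * Uᴴ)))) := by simp only [Matrix.mul_assoc]
      _ = U * (Ξ * (Ξ' * Uᴴ)) := by rw [canc]
      _ = U * ((Ξ * Ξ') * Uᴴ) := by simp only [Matrix.mul_assoc]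
      _ = 1 := by rw [hΞΞ', Matrix.one_mul, hUU]
  rw [hinv, hK]
  calc U * (Ξ' * Uᴴ) * -(U * Ξ * Uᴴ * Ψ)
      = -(U * (Ξ' * (Uᴴ * (U * (Ξ * (Uᴴ * Ψ)))))) := by
        simp only [Matrix.mul_neg, Matrix.mul_assoc]
    _ = -(U * (Ξ' * (Ξ * (Uᴴ * Ψ)))) := by rw [canc]
    _ = -(U * ((Ξ' * Ξ) * (Uᴴ * Ψ))) := by simp only [Matrix.mul_assoc]
    _ = -Ψ := by rw [hΞ'Ξ, Matrix.one_mul, canc2]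
end

section
/- Let Ψ₁₂ ∈ ℂ^{N_r×N_e}, let U ∈ ℂ^{N_r×N_r} be unitary, and let σ₁, …, σ_{N_r} ≥ 0 be real numbers such that Ψ₁₂Ψ₁₂ᴴ = U diag(σ₁, …, σ_{N_r}) Uᴴ. Define Ξ := diag(2/(1+√(1+4σ₁)), …, 2/(1+√(1+4σ_{N_r}))) and K̄ := −U Ξ Uᴴ Ψ₁₂, and for any M ∈ ℂ^{N_r×N_e} with I − MMᴴ Hermitian positive definite define h(M) := 2 Re tr(Ψ₁₂ Mᴴ) − ln det(I − MMᴴ) (the determinant is a positive real). Then I − K̄K̄ᴴ is Hermitian positive definite and h(K̄) ≤ h(M) for every M ∈ ℂ^{N_r×N_e} with I − MMᴴ Hermitian positive definite. -/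
open Matrix
open scoped ComplexOrder

lemma myPosDef_conj {n : ℕ} {B R S : Matrix (Fin n) (Fin n) ℂ}
    (hB : B.PosDef) (hS : S * Rᴴ = 1) : (R * B * Rᴴ).PosDef := by
  refine Matrix.PosDef.of_dotProduct_mulVec_pos (Matrix.isHermitian_mul_mul_conjTranspose _ hB.1) fun x hx => ?_
  have hx' : Rᴴ *ᵥ x ≠ 0 := fun h0 => hx (by
    have h1 := congrArg (S *ᵥ ·) h0
    simpa [Matrix.mulVec_mulVec, hS] using h1)
  have h2 := hB.dotProduct_mulVec_pos hx'
  simpa only [star_mulVec, dotProduct_mulVec, vecMul_vecMul, conjTranspose_conjTranspose,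
    Matrix.mul_assoc] using h2

lemma myTraceRe_nonneg {n : ℕ} {A : Matrix (Fin n) (Fin n) ℂ} (hA : A.PosSemidef) :
    0 ≤ A.trace.re := by
  have h : ∀ i, 0 ≤ (A i i).re := by
    intro i
    have h1 := hA.dotProduct_mulVec_nonneg (Pi.single i 1)
    rw [Complex.le_def] at h1
    simpa [dotProduct, Pi.single_apply, apply_ite] using h1.1
  simpa [Matrix.trace, Matrix.diag, Complex.re_sum] using Finset.sum_nonneg (fun i _ => h i)

lemma myLogDet_le {n : ℕ} {C : Matrix (Fin n) (Fin n) ℂ} (hC : C.PosDef) :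
    Real.log C.det.re ≤ C.trace.re - n := by
  have hH := hC.isHermitian
  have hdet : C.det.re = ∏ i, hH.eigenvalues i := by
    rw [hH.det_eq_prod_eigenvalues]; norm_cast
  have htr : C.trace.re = ∑ i, hH.eigenvalues i := by
    have h1 : C.trace = ∑ i, (hH.eigenvalues i : ℂ) := by
      conv_lhs => rw [hH.spectral_theorem]
      rw [Unitary.conjStarAlgAut_apply, Matrix.trace_mul_cycle]
      rw [show star (hH.eigenvectorUnitary : Matrix (Fin n) (Fin n) ℂ) *
          (hH.eigenvectorUnitary : Matrix (Fin n) (Fin n) ℂ) = 1 from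
        (Matrix.mem_unitaryGroup_iff').mp (hH.eigenvectorUnitary).2]
      simp [Matrix.trace_diagonal]
    rw [h1]; norm_cast
  have hpos : ∀ i, 0 < hH.eigenvalues i := fun i => hC.eigenvalues_pos i
  rw [hdet, htr, Real.log_prod (fun i _ => (hpos i).ne')]
  calc ∑ i, Real.log (hH.eigenvalues i) ≤ ∑ i, (hH.eigenvalues i - 1) :=
        Finset.sum_le_sum (fun i _ => Real.log_le_sub_one_of_pos (hpos i))
    _ = (∑ i, hH.eigenvalues i) - n := by rw [Finset.sum_sub_distrib]; simp

set_option maxHeartbeats 1000000 in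
/-- Lemma 3 of the paper: the closed-form `K̄` is the global
minimizer of `h(M) = 2 Re tr(Ψ₁₂ Mᴴ) − ln det(I − MMᴴ)` over the strictly
feasible set `{M : I − MMᴴ ≻ 0}`. -/
theorem stmt_13 {Nr Ne : ℕ}
    (Ψ : Matrix (Fin Nr) (Fin Ne) ℂ)
    (U : Matrix (Fin Nr) (Fin Nr) ℂ) (hU : Uᴴ * U = 1)
    (σ : Fin Nr → ℝ) (hσ : ∀ i, 0 ≤ σ i)
    (hdecomp : Ψ * Ψᴴ = U * Matrix.diagonal (fun i => ((σ i : ℝ) : ℂ)) * Uᴴ)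
    (Ξ : Matrix (Fin Nr) (Fin Nr) ℂ)
    (hΞ : Ξ = Matrix.diagonal (fun i => ((2 / (1 + Real.sqrt (1 + 4 * σ i)) : ℝ) : ℂ)))
    (K : Matrix (Fin Nr) (Fin Ne) ℂ)
    (hK : K = -(U * Ξ * Uᴴ * Ψ)) :
    (1 - K * Kᴴ).PosDef ∧
    ∀ M : Matrix (Fin Nr) (Fin Ne) ℂ, (1 - M * Mᴴ).PosDef →
      2 * ((Ψ * Kᴴ).trace).re - Real.log ((1 - K * Kᴴ).det.re)
        ≤ 2 * ((Ψ * Mᴴ).trace).re - Real.log ((1 - M * Mᴴ).det.re) := by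
  have hU' : U * Uᴴ = 1 := mul_eq_one_comm.mp hU
  -- scalar facts
  set ξ : Fin Nr → ℝ := fun i => 2 / (1 + Real.sqrt (1 + 4 * σ i)) with hξdef
  have hΞ' : Ξ = Matrix.diagonal (fun i => ((ξ i : ℝ) : ℂ)) := hΞ
  clear hΞ
  have hsq : ∀ i, Real.sqrt (1 + 4 * σ i) ^ 2 = 1 + 4 * σ i :=
    fun i => Real.sq_sqrt (by nlinarith [hσ i])
  have hspos : ∀ i, 0 < 1 + Real.sqrt (1 + 4 * σ i) :=
    fun i => by positivity
  have hξpos : ∀ i, 0 < ξ i := fun i => div_pos two_pos (hspos i)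
  have hξid : ∀ i, ξ i + σ i * ξ i ^ 2 = 1 := by
    intro i
    have h1 := hsq i
    have h2 := hspos i
    rw [hξdef]
    field_simp
    nlinarith [h1]
  have hξinv : ∀ i, (ξ i)⁻¹ = 1 + σ i * ξ i := by
    intro i
    refine inv_eq_of_mul_eq_one_right ?_
    nlinarith [hξid i]
  -- assoc helpers
  have hUl : ∀ {m : Type} (Z : Matrix (Fin Nr) m ℂ), Uᴴ * (U * Z) = Z := by
    intro m Z; rw [← Matrix.mul_assoc, hU, Matrix.one_mul]
  have hUl' : ∀ {m : Type} (Z : Matrix (Fin Nr) m ℂ), U * (Uᴴ * Z) = Z := by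
    intro m Z; rw [← Matrix.mul_assoc, hU', Matrix.one_mul]
  have hPsi : ∀ {m : Type} (Z : Matrix (Fin Nr) m ℂ),
      Ψ * (Ψᴴ * Z) = U * (Matrix.diagonal (fun i => ((σ i : ℝ) : ℂ)) * (Uᴴ * Z)) := by
    intro m Z
    rw [← Matrix.mul_assoc, hdecomp]
    simp only [Matrix.mul_assoc]
  have hconj_mul : ∀ f g : Fin Nr → ℂ,
      (U * Matrix.diagonal f * Uᴴ) * (U * Matrix.diagonal g * Uᴴ)
        = U * Matrix.diagonal (fun i => f i * g i) * Uᴴ := by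
    intro f g
    simp only [Matrix.mul_assoc, hUl]
    rw [← Matrix.mul_assoc (Matrix.diagonal f) (Matrix.diagonal g),
      Matrix.diagonal_mul_diagonal]
  have hdiagH : ∀ f : Fin Nr → ℝ,
      (Matrix.diagonal (fun i => ((f i : ℝ) : ℂ)))ᴴ = Matrix.diagonal (fun i => ((f i : ℝ) : ℂ)) := by
    intro f
    simp [Matrix.diagonal_conjTranspose, Pi.star_def, Complex.conj_ofReal]
  have hdiag_congr : ∀ {f g : Fin Nr → ℂ}, (∀ i, f i = g i) →
      U * Matrix.diagonal f * Uᴴ = U * Matrix.diagonal g * Uᴴ := by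
    intro f g h
    rw [show f = g from funext h]
  -- 1 - K Kᴴ = U Ξ Uᴴ
  have hKKexp : K * Kᴴ =
      (U * Matrix.diagonal (fun i => ((ξ i : ℝ) : ℂ)) * Uᴴ)
        * (U * Matrix.diagonal (fun i => ((σ i : ℝ) : ℂ)) * Uᴴ)
        * (U * Matrix.diagonal (fun i => ((ξ i : ℝ) : ℂ)) * Uᴴ) := by
    rw [hK, hΞ']
    simp only [conjTranspose_neg, conjTranspose_mul, conjTranspose_conjTranspose,
      hdiagH, neg_mul_neg, Matrix.neg_mul, Matrix.mul_neg, neg_neg]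
    simp only [Matrix.mul_assoc, hPsi, hUl]
  have hKK : K * Kᴴ = U * Matrix.diagonal (fun i => ((ξ i * σ i * ξ i : ℝ) : ℂ)) * Uᴴ := by
    rw [hKKexp]
    simp only [hconj_mul]
    exact hdiag_congr fun i => by push_cast; ring
  have hone : (1 : Matrix (Fin Nr) (Fin Nr) ℂ)
      = U * Matrix.diagonal (fun _ => (1:ℂ)) * Uᴴ := by
    rw [Matrix.diagonal_one, Matrix.mul_one, hU']
  have hA : 1 - K * Kᴴ = U * Matrix.diagonal (fun i => ((ξ i : ℝ) : ℂ)) * Uᴴ := by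
    rw [hKK]
    conv_lhs => rw [hone]
    rw [← Matrix.sub_mul, ← Matrix.mul_sub, Matrix.diagonal_sub]
    refine hdiag_congr fun i => ?_
    show (1:ℂ) - ((ξ i * σ i * ξ i : ℝ) : ℂ) = ((ξ i : ℝ) : ℂ)
    norm_cast
    nlinarith [hξid i]
  have hApd : (U * Matrix.diagonal (fun i => ((ξ i : ℝ) : ℂ)) * Uᴴ).PosDef :=
    myPosDef_conj (Matrix.PosDef.diagonal (fun i => Complex.zero_lt_real.mpr (hξpos i))) hU'
  refine ⟨by rw [hA]; exact hApd, ?_⟩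
  intro M hB
  -- P, R
  have hPpd : (U * Matrix.diagonal (fun i => (((ξ i)⁻¹ : ℝ) : ℂ)) * Uᴴ).PosDef :=
    myPosDef_conj (Matrix.PosDef.diagonal
      (fun i => Complex.zero_lt_real.mpr (inv_pos.mpr (hξpos i)))) hU'
  set P : Matrix (Fin Nr) (Fin Nr) ℂ
    := U * Matrix.diagonal (fun i => (((ξ i)⁻¹ : ℝ) : ℂ)) * Uᴴ with hPdef
  set R : Matrix (Fin Nr) (Fin Nr) ℂ
    := U * Matrix.diagonal (fun i => (((Real.sqrt (ξ i))⁻¹ : ℝ) : ℂ)) * Uᴴ with hRdef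
  have hPH : Pᴴ = P := hPpd.isHermitian
  have hRH : Rᴴ = R := by
    rw [hRdef]
    simp only [conjTranspose_mul, conjTranspose_conjTranspose, hdiagH]
    simp [Matrix.mul_assoc]
  have hRR : R * R = P := by
    rw [hRdef, hPdef]
    simp only [hconj_mul]
    exact hdiag_congr fun i => by
      push_cast
      rw [← mul_inv]
      norm_cast
      rw [Real.mul_self_sqrt (hξpos i).le]
  -- P K = -Ψ
  have hdpcξ : Matrix.diagonal (fun i => (((ξ i)⁻¹ : ℝ) : ℂ))
      * Matrix.diagonal (fun i => ((ξ i : ℝ) : ℂ)) = 1 := by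
    rw [Matrix.diagonal_mul_diagonal, ← Matrix.diagonal_one]
    refine congrArg _ (funext fun i => ?_)
    push_cast
    exact inv_mul_cancel₀ (by exact_mod_cast (hξpos i).ne')
  have hPK : P * K = -Ψ := by
    rw [hK, hΞ', hPdef]
    simp only [Matrix.mul_neg, Matrix.mul_assoc, hUl]
    rw [← Matrix.mul_assoc (Matrix.diagonal _) (Matrix.diagonal _), hdpcξ, Matrix.one_mul, hUl']
  -- C = R B R PosDef
  have hSR : (U * Matrix.diagonal (fun i => ((Real.sqrt (ξ i) : ℝ) : ℂ)) * Uᴴ) * Rᴴ = 1 := by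
    rw [hRH, hRdef]
    simp only [hconj_mul]
    rw [hone]
    exact hdiag_congr fun i => by
      push_cast
      exact mul_inv_cancel₀ (by
        exact_mod_cast Real.sqrt_ne_zero'.mpr (hξpos i))
  have hCpd : (R * (1 - M * Mᴴ) * R).PosDef := by
    have h := myPosDef_conj hB hSR
    rwa [hRH] at h
  -- determinant and trace helpers
  have hdetU : ∀ f : Fin Nr → ℝ,
      (U * Matrix.diagonal (fun i => ((f i : ℝ) : ℂ)) * Uᴴ).det = ((∏ i, f i : ℝ) : ℂ) := by
    intro f
    have hUU : Uᴴ.det * U.det = 1 := by rw [← Matrix.det_mul, hU, Matrix.det_one]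
    rw [Matrix.det_mul, Matrix.det_mul]
    rw [show U.det * (Matrix.diagonal (fun i => ((f i : ℝ) : ℂ))).det * Uᴴ.det
        = (Uᴴ.det * U.det) * (Matrix.diagonal (fun i => ((f i : ℝ) : ℂ))).det by ring]
    rw [hUU, one_mul, Matrix.det_diagonal]
    push_cast; ring
  have htrU : ∀ f : Fin Nr → ℝ,
      (U * Matrix.diagonal (fun i => ((f i : ℝ) : ℂ)) * Uᴴ).trace = ((∑ i, f i : ℝ) : ℂ) := by
    intro f
    rw [Matrix.trace_mul_comm, ← Matrix.mul_assoc, hU, Matrix.one_mul, Matrix.trace_diagonal]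
    push_cast; ring
  -- trace of Ψ Kᴴ
  have hPsiK : Ψ * Kᴴ = -((U * Matrix.diagonal (fun i => ((σ i : ℝ) : ℂ)) * Uᴴ)
      * (U * Matrix.diagonal (fun i => ((ξ i : ℝ) : ℂ)) * Uᴴ)) := by
    rw [hK, hΞ']
    simp only [conjTranspose_neg, conjTranspose_mul, conjTranspose_conjTranspose,
      hdiagH, Matrix.mul_neg, Matrix.neg_mul, neg_neg, neg_inj]
    simp only [Matrix.mul_assoc, hPsi, hUl]
  have htK : ((Ψ * Kᴴ).trace).re = -(∑ i, σ i * ξ i) := by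
    rw [hPsiK]
    simp only [hconj_mul]
    rw [show (U * Matrix.diagonal (fun i => ((σ i : ℝ) : ℂ) * ((ξ i : ℝ) : ℂ)) * Uᴴ)
        = U * Matrix.diagonal (fun i => ((σ i * ξ i : ℝ) : ℂ)) * Uᴴ from
      hdiag_congr fun i => by push_cast; ring]
    rw [Matrix.trace_neg, htrU (fun i => σ i * ξ i)]
    simp
  -- quadratic inequality
  have hq0 : 0 ≤ ((P * ((M - K) * (M - K)ᴴ)).trace).re := by
    have hpsd := (hPpd.posSemidef).conjTranspose_mul_mul_same (M - K)
    have h0 := myTraceRe_nonneg hpsd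
    have heq : ((M - K)ᴴ * P * (M - K)).trace = (P * ((M - K) * (M - K)ᴴ)).trace := by
      rw [Matrix.trace_mul_cycle, Matrix.trace_mul_comm, Matrix.mul_assoc]
    rwa [heq] at h0
  have hexp : P * ((M - K) * (M - K)ᴴ)
      = P * (M * Mᴴ) - P * (M * Kᴴ) - P * (K * Mᴴ) + P * (K * Kᴴ) := by
    simp only [conjTranspose_sub, Matrix.sub_mul, Matrix.mul_sub]
    abel
  have hPMK : ((P * (M * Kᴴ)).trace).re = -((Ψ * Mᴴ).trace).re := by
    have h1 : (P * (M * Kᴴ))ᴴ = K * Mᴴ * P := by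
      simp only [conjTranspose_mul, conjTranspose_conjTranspose, hPH, Matrix.mul_assoc]
    have h2 : ((P * (M * Kᴴ)).trace).re = ((K * Mᴴ * P).trace).re := by
      rw [← h1, Matrix.trace_conjTranspose]
      simp [Complex.star_def]
    rw [h2, Matrix.trace_mul_cycle, hPK, Matrix.neg_mul, Matrix.trace_neg]
    simp
  have hPKM : ((P * (K * Mᴴ)).trace).re = -((Ψ * Mᴴ).trace).re := by
    rw [← Matrix.mul_assoc, hPK, Matrix.neg_mul, Matrix.trace_neg]
    simp
  have hPKK : ((P * (K * Kᴴ)).trace).re = -((Ψ * Kᴴ).trace).re := by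
    rw [← Matrix.mul_assoc, hPK, Matrix.neg_mul, Matrix.trace_neg]
    simp
  have hF4 : 0 ≤ ((P * (M * Mᴴ)).trace).re + 2 * ((Ψ * Mᴴ).trace).re - ((Ψ * Kᴴ).trace).re := by
    rw [hexp] at hq0
    rw [Matrix.trace_add, Matrix.trace_sub, Matrix.trace_sub] at hq0
    rw [Complex.add_re, Complex.sub_re, Complex.sub_re] at hq0
    rw [hPMK, hPKM, hPKK] at hq0
    linarith
  -- the log-det tangent inequality
  have hdetB_pos : (0:ℂ) < (1 - M * Mᴴ).det := hB.det_pos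
  have hdetB_re : 0 < ((1 - M * Mᴴ).det).re := by
    rw [Complex.lt_def] at hdetB_pos
    simpa using hdetB_pos.1
  have hdetB_eq : (1 - M * Mᴴ).det = ((((1 - M * Mᴴ).det).re : ℝ) : ℂ) := by
    rw [Complex.lt_def] at hdetB_pos
    apply Complex.ext
    · simp
    · simp [← hdetB_pos.2]
  have hdetR : R.det = ((∏ i, (Real.sqrt (ξ i))⁻¹ : ℝ) : ℂ) := hdetU _
  have hprodξpos : 0 < ∏ i, ξ i := Finset.prod_pos (fun i _ => hξpos i)
  have hcpos : 0 < ∏ i, (Real.sqrt (ξ i))⁻¹ :=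
    Finset.prod_pos (fun i _ => inv_pos.mpr (Real.sqrt_pos.mpr (hξpos i)))
  have hcc : (∏ i, (Real.sqrt (ξ i))⁻¹) * (∏ i, (Real.sqrt (ξ i))⁻¹) = (∏ i, ξ i)⁻¹ := by
    rw [← Finset.prod_mul_distrib, ← Finset.prod_inv_distrib]
    congr 1
    funext i
    rw [← mul_inv, Real.mul_self_sqrt (hξpos i).le]
  have hdetC : ((R * (1 - M * Mᴴ) * R).det).re
      = (∏ i, ξ i)⁻¹ * ((1 - M * Mᴴ).det).re := by
    rw [Matrix.det_mul, Matrix.det_mul, hdetR]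
    conv_lhs => rw [hdetB_eq]
    rw [← Complex.ofReal_mul, ← Complex.ofReal_mul, Complex.ofReal_re, ← hcc]
    ring
  have htrC : ((R * (1 - M * Mᴴ) * R).trace).re
      = (∑ i, (ξ i)⁻¹) - ((P * (M * Mᴴ)).trace).re := by
    rw [Matrix.trace_mul_cycle, hRR]
    rw [Matrix.mul_sub, Matrix.mul_one, Matrix.trace_sub, Complex.sub_re]
    have hPtr : P.trace.re = ∑ i, (ξ i)⁻¹ := by
      rw [hPdef, htrU (fun i => (ξ i)⁻¹)]
      simp
    rw [hPtr]
  have hF1 : Real.log (((1 - M * Mᴴ).det).re) - Real.log (∏ i, ξ i)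
      ≤ (∑ i, (ξ i)⁻¹) - ((P * (M * Mᴴ)).trace).re - Nr := by
    have h := myLogDet_le hCpd
    rw [hdetC, htrC] at h
    rw [Real.log_mul (inv_pos.mpr hprodξpos).ne' hdetB_re.ne', Real.log_inv] at h
    linarith
  -- sum identity
  have hF6 : (∑ i, (ξ i)⁻¹) = (Nr : ℝ) + ∑ i, σ i * ξ i := by
    rw [show (∑ i, (ξ i)⁻¹) = ∑ i : Fin Nr, (1 + σ i * ξ i) from
      Finset.sum_congr rfl fun i _ => hξinv i]
    rw [Finset.sum_add_distrib]
    simp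
  -- final assembly
  rw [hA, hdetU ξ, Complex.ofReal_re]
  linarith [hF1, hF4, hF6, htK]
end
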